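/- Let n be a natural number, set N = 2n+1, let a < b be real numbers, let t_0, …, t_n ∈ [a, b] be pairwise distinct, let x : ℝ → ℝ^d be (N+1)-times continuously differentiable on [a, b], and suppose M ≥ 0 satisfies ‖x^{(N+1)}(s)‖ ≤ M for all s ∈ [a, b]. Let p : ℝ → ℝ^d be a polynomial map of degree at most N (componentwise) satisfying p(t_i) = x(t_i) and p'(t_i) = x'(t_i) for all i. Then for every t ∈ [a, b], ‖x(t) - p(t)‖ ≤ (M/(N+1)!) · ∏_{i=0}^{n} (t - t_i)^2. -/

import Mathlib

open Set Polynomial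

lemma aux_rolle_family {f : ℝ → ℝ} {a b : ℝ} (hf : ContinuousOn f (Set.Icc a b))
    {m : ℕ} (e : Fin (m + 1) → ℝ) (he : StrictMono e)
    (hmem : ∀ i, e i ∈ Set.Icc a b) (hz : ∀ i, f (e i) = 0) :
    ∃ e' : Fin m → ℝ, StrictMono e' ∧
      (∀ i : Fin m, e i.castSucc < e' i ∧ e' i < e i.succ) ∧
      ∀ i, deriv f (e' i) = 0 := by
  have h : ∀ i : Fin m, ∃ c, (e i.castSucc < c ∧ c < e i.succ) ∧ deriv f c = 0 := by
    intro i
    have hlt : e i.castSucc < e i.succ := he Fin.castSucc_lt_succ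
    have hsub : Set.Icc (e i.castSucc) (e i.succ) ⊆ Set.Icc a b :=
      Set.Icc_subset_Icc (hmem i.castSucc).1 (hmem i.succ).2
    obtain ⟨c, hc, hc0⟩ := exists_deriv_eq_zero hlt (hf.mono hsub) ((hz _).trans (hz _).symm)
    exact ⟨c, ⟨hc.1, hc.2⟩, hc0⟩
  choose e' he' h0 using h
  refine ⟨e', ?_, he', h0⟩
  intro i j hij
  have h1 : (e' i) < e i.succ := (he' i).2
  have h2 : e j.castSucc < e' j := (he' j).1
  have h3 : e i.succ ≤ e j.castSucc := by
    apply he.monotone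
    simp only [Fin.le_def, Fin.val_succ, Fin.coe_castSucc]
    omega
  linarith

lemma aux_rolle_chain {a b : ℝ} (hab : a < b) {φ : ℝ → ℝ} {K : ℕ}
    (hφ : ContDiffOn ℝ K φ (Set.Icc a b)) :
    ∀ (m j : ℕ), j + m ≤ K → ∀ e : Fin (m + 1) → ℝ, StrictMono e →
      (∀ i, e i ∈ Set.Icc a b) →
      (∀ i, iteratedDerivWithin j φ (Set.Icc a b) (e i) = 0) →
      ∃ ξ ∈ Set.Icc a b, iteratedDerivWithin (j + m) φ (Set.Icc a b) ξ = 0 := by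
  intro m
  induction m with
  | zero => intro j _ e _ hmem hz; exact ⟨e 0, hmem 0, by simpa using hz 0⟩
  | succ m IH =>
    intro j hjm e he hmem hz
    have hud : UniqueDiffOn ℝ (Set.Icc a b) := uniqueDiffOn_Icc hab
    have hcont : ContinuousOn (iteratedDerivWithin j φ (Set.Icc a b)) (Set.Icc a b) :=
      hφ.continuousOn_iteratedDerivWithin (by exact_mod_cast Nat.le_of_add_right_le hjm) hud
    obtain ⟨e', he', hsand, h0⟩ := aux_rolle_family hcont e he hmem hz
    have hmem' : ∀ i, e' i ∈ Set.Ioo a b := by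
      intro i
      exact ⟨lt_of_le_of_lt (hmem i.castSucc).1 (hsand i).1,
        lt_of_lt_of_le (hsand i).2 (hmem i.succ).2⟩
    have hz' : ∀ i, iteratedDerivWithin (j + 1) φ (Set.Icc a b) (e' i) = 0 := by
      intro i
      rw [iteratedDerivWithin_succ,
        derivWithin_of_mem_nhds (Icc_mem_nhds (hmem' i).1 (hmem' i).2)]
      exact h0 i
    obtain ⟨ξ, hξ, h⟩ := IH (j + 1) (by omega) e' he'
      (fun i => Set.mem_Icc_of_Ioo (hmem' i)) hz'
    exact ⟨ξ, hξ, by rwa [show j + (m + 1) = j + 1 + m by omega]⟩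

lemma aux_polyContDiff (q : Polynomial ℝ) {n : WithTop ℕ∞} :
    ContDiff ℝ n fun x : ℝ => q.eval x := by
  induction q using Polynomial.induction_on' with
  | add p q hp hq => simpa [Polynomial.eval_add] using hp.add hq
  | monomial k c =>
    simpa [Polynomial.eval_monomial] using (contDiff_const (c := c)).mul (contDiff_id.pow k)

lemma aux_polyIter {a b : ℝ} (hab : a < b) :
    ∀ (k : ℕ) (q : Polynomial ℝ) ⦃x : ℝ⦄, x ∈ Set.Icc a b →
      iteratedDerivWithin k (fun y => q.eval y) (Set.Icc a b) x
        = (Polynomial.derivative^[k] q).eval x := by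
  intro k
  induction k with
  | zero => intro q x _; simp
  | succ k IH =>
    intro q x hx
    have hud : UniqueDiffOn ℝ (Set.Icc a b) := uniqueDiffOn_Icc hab
    rw [iteratedDerivWithin_succ']
    have : Set.EqOn (derivWithin (fun y => q.eval y) (Set.Icc a b))
        (fun y => q.derivative.eval y) (Set.Icc a b) := by
      intro y hy
      rw [(q.differentiableAt).derivWithin (hud.uniqueDiffWithinAt hy), Polynomial.deriv]
    rw [iteratedDerivWithin_congr this hx, IH q.derivative hx,
      Function.iterate_succ_apply]

lemma aux_clm_iter {F G : Type*} [NormedAddCommGroup F] [NormedSpace ℝ F]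
    [NormedAddCommGroup G] [NormedSpace ℝ G] (L : F →L[ℝ] G) {f : ℝ → F} {s : Set ℝ}
    {n : ℕ} {x : ℝ} (hf : ContDiffOn ℝ n f s) (hs : UniqueDiffOn ℝ s) (hx : x ∈ s) :
    iteratedDerivWithin n (fun y => L (f y)) s x = L (iteratedDerivWithin n f s x) := by
  rw [iteratedDerivWithin_eq_iteratedFDerivWithin, iteratedDerivWithin_eq_iteratedFDerivWithin,
    show (fun y => L (f y)) = L ∘ f from rfl,
    L.iteratedFDerivWithin_comp_left (hf x hx) hs hx le_rfl]
  rfl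

lemma aux_scalar (n N : ℕ) (hN : N = 2 * n + 1) {a b : ℝ} (hab : a < b)
    (ts : Fin (n + 1) → ℝ) (hts : Function.Injective ts) (htsmem : ∀ i, ts i ∈ Set.Icc a b)
    {g : ℝ → ℝ} (hg : ContDiffOn ℝ (N + 1 : ℕ) g (Set.Icc a b))
    {C : ℝ} (hC : ∀ s ∈ Set.Icc a b, |iteratedDerivWithin (N + 1) g (Set.Icc a b) s| ≤ C)
    (hz : ∀ i, g (ts i) = 0) (hz' : ∀ i, derivWithin g (Set.Icc a b) (ts i) = 0)
    {t : ℝ} (ht : t ∈ Set.Icc a b) (htn : ∀ i, t ≠ ts i) :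
    |g t| ≤ C / (Nat.factorial (N + 1) : ℝ) * ∏ i, (t - ts i) ^ 2 := by
  have hud : UniqueDiffOn ℝ (Set.Icc a b) := uniqueDiffOn_Icc hab
  set W : Polynomial ℝ := ∏ i : Fin (n + 1), (X - Polynomial.C (ts i)) ^ 2 with hW
  have hWeval : ∀ s, W.eval s = ∏ i, (s - ts i) ^ 2 := by
    intro s; simp [hW, eval_prod]
  have hWmonic : W.Monic := monic_prod_of_monic _ _ fun i _ => (monic_X_sub_C _).pow 2
  have hWdeg : W.natDegree = N + 1 := by
    rw [hW, natDegree_prod _ _ fun i _ => pow_ne_zero 2 (X_sub_C_ne_zero _)]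
    simp [natDegree_pow, natDegree_X_sub_C]
    omega
  have hwt : 0 < W.eval t := by
    rw [hWeval]
    exact Finset.prod_pos fun i _ =>
      lt_of_le_of_ne (sq_nonneg _) (Ne.symm (pow_ne_zero 2 (sub_ne_zero.mpr (htn i))))
  set K₀ : ℝ := g t / W.eval t with hK₀
  set φ : ℝ → ℝ := fun s => g s - K₀ * W.eval s with hφdef
  have hWcd : ContDiffOn ℝ (N + 1 : ℕ) (fun s => K₀ * W.eval s) (Set.Icc a b) :=
    (contDiff_const.mul (aux_polyContDiff W)).contDiffOn
  have hφ : ContDiffOn ℝ (N + 1 : ℕ) φ (Set.Icc a b) := hg.sub hWcd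
  have hφt : φ t = 0 := by
    simp only [hφdef, hK₀]; field_simp; ring
  have hWts : ∀ i, W.eval (ts i) = 0 := by
    intro i
    rw [hWeval]
    exact Finset.prod_eq_zero (Finset.mem_univ i) (by simp)
  have hφts : ∀ i, φ (ts i) = 0 := by
    intro i; simp [hφdef, hz i, hWts i]
  have hWd0 : ∀ i, W.derivative.eval (ts i) = 0 := by
    intro i
    have : W = (X - Polynomial.C (ts i)) ^ 2 *
        ∏ j ∈ Finset.univ.erase i, (X - Polynomial.C (ts j)) ^ 2 :=
      (Finset.mul_prod_erase _ _ (Finset.mem_univ i)).symm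
    rw [this, derivative_mul, derivative_pow]
    simp
  have hφ'ts : ∀ i, derivWithin φ (Set.Icc a b) (ts i) = 0 := by
    intro i
    have hgd : DifferentiableWithinAt ℝ g (Set.Icc a b) (ts i) :=
      (hg.differentiableOn (by simp)) _ (htsmem i)
    have hWda : DifferentiableAt ℝ (fun s => K₀ * W.eval s) (ts i) :=
      (W.differentiableAt).const_mul K₀
    rw [show derivWithin φ (Set.Icc a b) (ts i)
        = derivWithin (fun s => g s - K₀ * W.eval s) (Set.Icc a b) (ts i) from rfl,
      derivWithin_fun_sub hgd hWda.differentiableWithinAt, hz' i,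
      hWda.derivWithin (hud.uniqueDiffWithinAt (htsmem i)), deriv_const_mul _ W.differentiableAt,
      Polynomial.deriv, hWd0 i]
    ring
  -- the finset of n+2 zeros of φ
  set Z : Finset ℝ := insert t (Finset.image ts Finset.univ) with hZ
  have htnotmem : t ∉ Finset.image ts Finset.univ := by
    simp only [Finset.mem_image, Finset.mem_univ, true_and, not_exists]
    exact fun i h => (htn i) h.symm
  have hZcard : Z.card = n + 2 := by
    rw [hZ, Finset.card_insert_of_notMem htnotmem,
      Finset.card_image_of_injective _ hts, Finset.card_univ, Fintype.card_fin]
  have hZicc : ∀ z ∈ Z, z ∈ Set.Icc a b := by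
    intro z hzZ
    rcases Finset.mem_insert.mp hzZ with h | h
    · exact h ▸ ht
    · obtain ⟨i, _, rfl⟩ := Finset.mem_image.mp h; exact htsmem i
  have hZzero : ∀ z ∈ Z, φ z = 0 := by
    intro z hzZ
    rcases Finset.mem_insert.mp hzZ with h | h
    · exact h ▸ hφt
    · obtain ⟨i, _, rfl⟩ := Finset.mem_image.mp h; exact hφts i
  set e : Fin (n + 2) → ℝ := fun i => ((Z.orderIsoOfFin hZcard) i : ℝ) with he_def
  have he : StrictMono e := fun i j hij =>
    Subtype.coe_lt_coe.mpr ((Z.orderIsoOfFin hZcard).strictMono hij)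
  have hemem : ∀ i, e i ∈ Z := fun i => ((Z.orderIsoOfFin hZcard) i).2
  obtain ⟨e', he', hsand, h0⟩ := aux_rolle_family hφ.continuousOn e he
    (fun i => hZicc _ (hemem i)) (fun i => hZzero _ (hemem i))
  have he'Ioo : ∀ i, e' i ∈ Set.Ioo a b := fun i =>
    ⟨lt_of_le_of_lt (hZicc _ (hemem i.castSucc)).1 (hsand i).1,
      lt_of_lt_of_le (hsand i).2 (hZicc _ (hemem i.succ)).2⟩
  have he'notZ : ∀ i, e' i ∉ Z := by
    intro i hmem
    obtain ⟨k, hk⟩ := (Z.orderIsoOfFin hZcard).surjective ⟨e' i, hmem⟩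
    have hk' : e k = e' i := congrArg Subtype.val hk
    have h1 : i.castSucc < k := he.lt_iff_lt.mp (by rw [hk']; exact (hsand i).1)
    have h2 : k < i.succ := he.lt_iff_lt.mp (by rw [hk']; exact (hsand i).2)
    have := Fin.lt_def.mp h1
    have := Fin.lt_def.mp h2
    simp only [Fin.coe_castSucc, Fin.val_succ] at *
    omega
  -- combined 2n+2 zeros of φ'
  set T : Finset ℝ := Finset.image e' Finset.univ ∪ Finset.image ts Finset.univ with hT
  have hdisj : Disjoint (Finset.image e' Finset.univ) (Finset.image ts Finset.univ) := by
    rw [Finset.disjoint_left]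
    intro z hz1 hz2
    obtain ⟨i, _, rfl⟩ := Finset.mem_image.mp hz1
    exact he'notZ i (Finset.mem_insert_of_mem hz2)
  have hTcard : T.card = 2 * n + 1 + 1 := by
    rw [hT, Finset.card_union_of_disjoint hdisj,
      Finset.card_image_of_injective _ he'.injective,
      Finset.card_image_of_injective _ hts, Finset.card_univ, Fintype.card_fin]
    omega
  have hTicc : ∀ z ∈ T, z ∈ Set.Icc a b := by
    intro z hzT
    rcases Finset.mem_union.mp hzT with h | h
    · obtain ⟨i, _, rfl⟩ := Finset.mem_image.mp h; exact Set.mem_Icc_of_Ioo (he'Ioo i)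
    · obtain ⟨i, _, rfl⟩ := Finset.mem_image.mp h; exact htsmem i
  have hTzero : ∀ z ∈ T, iteratedDerivWithin 1 φ (Set.Icc a b) z = 0 := by
    intro z hzT
    have hzicc := hTicc z hzT
    rw [iteratedDerivWithin_one]
    rcases Finset.mem_union.mp hzT with h | h
    · obtain ⟨i, _, rfl⟩ := Finset.mem_image.mp h
      rw [derivWithin_of_mem_nhds (Icc_mem_nhds (he'Ioo i).1 (he'Ioo i).2)]
      exact h0 i
    · obtain ⟨i, _, rfl⟩ := Finset.mem_image.mp h
      exact hφ'ts i
  set eT : Fin (2 * n + 1 + 1) → ℝ := fun i => ((T.orderIsoOfFin hTcard) i : ℝ) with heT_def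
  have heT : StrictMono eT := fun i j hij =>
    Subtype.coe_lt_coe.mpr ((T.orderIsoOfFin hTcard).strictMono hij)
  have heTmem : ∀ i, eT i ∈ T := fun i => ((T.orderIsoOfFin hTcard) i).2
  obtain ⟨ξ, hξ, hξ0⟩ := aux_rolle_chain hab hφ (2 * n + 1) 1 (by omega) eT heT
    (fun i => hTicc _ (heTmem i)) (fun i => hTzero _ (heTmem i))
  rw [show 1 + (2 * n + 1) = N + 1 by omega] at hξ0
  -- compute iterated derivative of φ
  have hWiter : iteratedDerivWithin (N + 1) (fun s => W.eval s) (Set.Icc a b) ξ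
      = (Nat.factorial (N + 1) : ℝ) := by
    rw [aux_polyIter hab (N + 1) W hξ]
    have h1 : (Polynomial.derivative^[N + 1] W).natDegree ≤ 0 := by
      have := natDegree_iterate_derivative W (N + 1)
      omega
    rw [Polynomial.eq_C_of_natDegree_le_zero h1, eval_C, coeff_iterate_derivative]
    rw [zero_add, show W.coeff (N + 1) = 1 from hWdeg ▸ hWmonic.coeff_natDegree,
      Nat.descFactorial_self]
    simp
  have hsplit : iteratedDerivWithin (N + 1) φ (Set.Icc a b) ξ
      = iteratedDerivWithin (N + 1) g (Set.Icc a b) ξ - K₀ * (Nat.factorial (N + 1) : ℝ) := by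
    rw [show φ = g - fun s => K₀ * W.eval s from rfl,
      iteratedDerivWithin_sub hξ hud (hg ξ hξ) (hWcd ξ hξ),
      iteratedDerivWithin_const_mul hξ hud K₀ (aux_polyContDiff W).contDiffWithinAt, hWiter]
  have hKeq : K₀ * (Nat.factorial (N + 1) : ℝ) = iteratedDerivWithin (N + 1) g (Set.Icc a b) ξ := by
    rw [hξ0] at hsplit; linarith
  have hfacpos : (0 : ℝ) < (Nat.factorial (N + 1) : ℝ) := by
    exact_mod_cast Nat.factorial_pos (N + 1)
  have hKb : |K₀| ≤ C / (Nat.factorial (N + 1) : ℝ) := by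
    rw [le_div_iff₀ hfacpos]
    calc |K₀| * (Nat.factorial (N + 1) : ℝ) = |K₀ * (Nat.factorial (N + 1) : ℝ)| := by
          rw [abs_mul, abs_of_pos hfacpos]
      _ ≤ C := by rw [hKeq]; exact hC ξ hξ
  have hgt : g t = K₀ * W.eval t := by
    rw [hK₀]; field_simp
  calc |g t| = |K₀| * W.eval t := by rw [hgt, abs_mul, abs_of_pos hwt]
    _ ≤ C / (Nat.factorial (N + 1) : ℝ) * W.eval t :=
        mul_le_mul_of_nonneg_right hKb hwt.le
    _ = _ := by rw [hWeval]

/-- Guaranteed Hermite–Birkhoff interpolation: if `x : ℝ → ℝ^d` is `(N+1)`-times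
continuously differentiable on `[a, b]` with `N = 2n + 1`, its `(N+1)`-st derivative is
bounded in norm by `M` on `[a, b]`, and `p` is a componentwise-polynomial map of degree
at most `N` matching the values and first derivatives of `x` at `n+1` pairwise distinct
nodes `ts i ∈ [a, b]`, then `‖x t - p t‖ ≤ M/(N+1)! · ∏ i, (t - ts i)^2` on `[a, b]`. -/
theorem hermite_interpolation_error_bound
    (d : ℕ) (n : ℕ) (N : ℕ) (hN : N = 2 * n + 1)
    (a b : ℝ) (hab : a < b)
    (ts : Fin (n + 1) → ℝ) (hts : Function.Injective ts)
    (htsmem : ∀ i, ts i ∈ Set.Icc a b)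
    (x : ℝ → EuclideanSpace ℝ (Fin d))
    (hx : ContDiffOn ℝ (N + 1) x (Set.Icc a b))
    (M : ℝ) (hM : 0 ≤ M)
    (hbound : ∀ s ∈ Set.Icc a b,
      ‖iteratedDerivWithin (N + 1) x (Set.Icc a b) s‖ ≤ M)
    (p : ℝ → EuclideanSpace ℝ (Fin d))
    (hpoly : ∀ j : Fin d, ∃ q : Polynomial ℝ,
      q.degree ≤ (N : ℕ) ∧ ∀ t, p t j = q.eval t)
    (hval : ∀ i, p (ts i) = x (ts i))
    (hder : ∀ i, deriv p (ts i) = derivWithin x (Set.Icc a b) (ts i)) :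
    ∀ t ∈ Set.Icc a b,
      ‖x t - p t‖ ≤ M / (Nat.factorial (N + 1) : ℝ) * ∏ i, (t - ts i) ^ 2 := by
  intro t ht
  have hud : UniqueDiffOn ℝ (Set.Icc a b) := uniqueDiffOn_Icc hab
  have hRHSnonneg : 0 ≤ M / (Nat.factorial (N + 1) : ℝ) * ∏ i, (t - ts i) ^ 2 :=
    mul_nonneg (div_nonneg hM (by positivity))
      (Finset.prod_nonneg fun i _ => sq_nonneg _)
  by_cases hcase : ∃ i, t = ts i
  · obtain ⟨i, rfl⟩ := hcase
    rw [hval i, sub_self, norm_zero]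
    exact hRHSnonneg
  push_neg at hcase
  set u : EuclideanSpace ℝ (Fin d) := x t - p t with hu_def
  by_cases hu : u = 0
  · rw [hu, norm_zero]; exact hRHSnonneg
  have hupos : (0 : ℝ) < ‖u‖ := norm_pos_iff.mpr hu
  choose q hqdeg hqeval using hpoly
  have hx' : ContDiffOn ℝ ((N + 1 : ℕ) : WithTop ℕ∞) x (Set.Icc a b) := by
    exact_mod_cast hx
  -- p is differentiable
  have hpeq : p = fun s => (EuclideanSpace.equiv (Fin d) ℝ).symm (fun j => (q j).eval s) := by
    funext s
    apply PiLp.ext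
    intro j
    simp [hqeval, EuclideanSpace.equiv]
  have hpdiff : Differentiable ℝ p := by
    rw [hpeq]
    exact (EuclideanSpace.equiv (Fin d) ℝ).symm.differentiable.comp
      (differentiable_pi.mpr fun j => (q j).differentiable)
  have hcomp : ∀ (j : Fin d) (t₀ : ℝ), deriv (fun s => p s j) t₀ = deriv p t₀ j := by
    intro j t₀
    exact (((EuclideanSpace.proj j).hasFDerivAt).comp_hasDerivAt t₀
      (hpdiff t₀).hasDerivAt).deriv
  set L : EuclideanSpace ℝ (Fin d) →L[ℝ] ℝ := innerSL ℝ u with hL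
  have hLapp : ∀ v : EuclideanSpace ℝ (Fin d), L v = ∑ j, u j * v j := by
    intro v
    simp [hL, innerSL_apply_apply, PiLp.inner_apply, RCLike.inner_apply, mul_comm]
  set Q : Polynomial ℝ := ∑ j, Polynomial.C (u j) * q j with hQ
  have hQeval : ∀ s, Q.eval s = L (p s) := by
    intro s
    rw [hLapp, hQ, eval_finset_sum]
    exact Finset.sum_congr rfl fun j _ => by rw [eval_mul, eval_C, hqeval]
  have hQdeg : Q.natDegree ≤ N := by
    apply natDegree_le_iff_degree_le.mpr
    refine (degree_sum_le _ _).trans (Finset.sup_le fun j _ => ?_)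
    calc ((Polynomial.C (u j)) * q j).degree ≤ (Polynomial.C (u j)).degree + (q j).degree :=
          degree_mul_le _ _
      _ ≤ 0 + (N : ℕ) := add_le_add degree_C_le (hqdeg j)
      _ = (N : ℕ) := zero_add _
  set g : ℝ → ℝ := fun s => L (x s) - Q.eval s with hg_def
  have hLx : ContDiffOn ℝ ((N + 1 : ℕ) : WithTop ℕ∞) (fun s => L (x s)) (Set.Icc a b) :=
    L.contDiff.comp_contDiffOn hx'
  have hgc : ContDiffOn ℝ (N + 1 : ℕ) g (Set.Icc a b) :=
    hLx.sub (aux_polyContDiff Q).contDiffOn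
  have hgiter : ∀ s ∈ Set.Icc a b, iteratedDerivWithin (N + 1) g (Set.Icc a b) s
      = L (iteratedDerivWithin (N + 1) x (Set.Icc a b) s) := by
    intro s hs
    rw [show g = (fun s => L (x s)) - (fun s => Q.eval s) from rfl,
      iteratedDerivWithin_sub hs hud (hLx s hs) (aux_polyContDiff Q).contDiffWithinAt,
      aux_clm_iter L hx' hud hs, aux_polyIter hab,
      Polynomial.iterate_derivative_eq_zero (by omega : Q.natDegree < N + 1),
      eval_zero, sub_zero]
    exact hs
  have hC : ∀ s ∈ Set.Icc a b,
      |iteratedDerivWithin (N + 1) g (Set.Icc a b) s| ≤ ‖u‖ * M := by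
    intro s hs
    rw [hgiter s hs]
    calc |L (iteratedDerivWithin (N + 1) x (Set.Icc a b) s)|
        ≤ ‖u‖ * ‖iteratedDerivWithin (N + 1) x (Set.Icc a b) s‖ := by
          rw [hL, innerSL_apply_apply]; exact abs_real_inner_le_norm _ _
      _ ≤ ‖u‖ * M := mul_le_mul_of_nonneg_left (hbound s hs) (norm_nonneg u)
  have hz : ∀ i, g (ts i) = 0 := by
    intro i
    simp only [hg_def, hQeval, hval i, sub_self]
  have hz' : ∀ i, derivWithin g (Set.Icc a b) (ts i) = 0 := by
    intro i
    have hxd : DifferentiableWithinAt ℝ x (Set.Icc a b) (ts i) :=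
      (hx.differentiableOn (by simp)) _ (htsmem i)
    have hLxd : HasDerivWithinAt (fun s => L (x s)) (L (derivWithin x (Set.Icc a b) (ts i)))
        (Set.Icc a b) (ts i) :=
      L.hasFDerivAt.comp_hasDerivWithinAt (ts i) hxd.hasDerivWithinAt
    have hQd : derivWithin (fun s => Q.eval s) (Set.Icc a b) (ts i)
        = L (derivWithin x (Set.Icc a b) (ts i)) := by
      rw [Q.differentiableAt.derivWithin (hud.uniqueDiffWithinAt (htsmem i)), Polynomial.deriv,
        ← hder i, hLapp]
      rw [hQ, derivative_sum]
      rw [eval_finset_sum]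
      refine Finset.sum_congr rfl fun j _ => ?_
      rw [derivative_C_mul, eval_mul, eval_C, ← Polynomial.deriv, ← hcomp j]
      congr 1
      apply Filter.EventuallyEq.deriv_eq
      filter_upwards with s
      rw [hqeval]
    rw [show g = fun s => L (x s) - Q.eval s from rfl,
      derivWithin_fun_sub hLxd.differentiableWithinAt
        Q.differentiableAt.differentiableWithinAt,
      hLxd.derivWithin (hud.uniqueDiffWithinAt (htsmem i)), hQd, sub_self]
  have hfinal := aux_scalar n N hN hab ts hts htsmem hgc hC hz hz' ht hcase
  have hgt : g t = ‖u‖ * ‖u‖ := by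
    rw [hg_def]
    simp only [hQeval]
    rw [← map_sub L, show x t - p t = u from rfl, hL, innerSL_apply_apply,
      real_inner_self_eq_norm_mul_norm]
  have : ‖u‖ * ‖u‖ ≤ ‖u‖ * (M / (Nat.factorial (N + 1) : ℝ) * ∏ i, (t - ts i) ^ 2) := by
    calc ‖u‖ * ‖u‖ = g t := hgt.symm
      _ ≤ |g t| := le_abs_self _
      _ ≤ ‖u‖ * M / (Nat.factorial (N + 1) : ℝ) * ∏ i, (t - ts i) ^ 2 := hfinal
      _ = ‖u‖ * (M / (Nat.factorial (N + 1) : ℝ) * ∏ i, (t - ts i) ^ 2) := by ring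
  exact le_of_mul_le_mul_left this hupos
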